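/- Let X and Y be Banach spaces, one of which has the approximation property. If (xₙ) ⊂ X converges weakly to x, (yₙ) ⊂ Y converges weakly to y, and (xₙ ⊗ yₙ) converges weakly in X ⊗̂_π Y, then (xₙ ⊗ yₙ) converges weakly to x ⊗ y. -/

import Mathlib

open Filter Topology NormedSpace

set_option linter.unusedSectionVars false

noncomputable section

variable (X Y : Type*) [NormedAddCommGroup X] [NormedSpace ℝ X] [CompleteSpace X]
  [NormedAddCommGroup Y] [NormedSpace ℝ Y] [CompleteSpace Y]

/-- The space `B(X × Y)` of bounded bilinear forms on `X × Y`. -/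
abbrev Bil := X →L[ℝ] Y →L[ℝ] ℝ

instance : NormedAddCommGroup (StrongDual ℝ (Bil X Y)) :=
  @ContinuousLinearMap.toNormedAddCommGroup ℝ ℝ (Bil X Y) ℝ _ _ _ _ _ _ (RingHom.id ℝ) _

instance : NormedSpace ℝ (StrongDual ℝ (Bil X Y)) :=
  ContinuousLinearMap.toNormedSpace (E := Bil X Y) (F := ℝ) (σ₁₂ := RingHom.id ℝ)

/-- The elementary tensor `x ⊗ y`, viewed as a functional on bounded bilinear
forms: `⟨x ⊗ y, B⟩ = B x y`. -/
def elemTensor (x : X) (y : Y) : StrongDual ℝ (Bil X Y) :=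
  (ContinuousLinearMap.apply ℝ ℝ y).comp (ContinuousLinearMap.apply ℝ (Y →L[ℝ] ℝ) x)

/-- The projective tensor product `X ⊗̂_π Y`: the closed linear span of the elementary
tensors inside `B(X × Y)*` (the induced dual norm is the projective norm, and the weak
topology of `X ⊗̂_π Y` is the topology `σ(X ⊗̂_π Y, B(X × Y))` inherited from the
weak-* topology of `B(X × Y)*`). -/
def ptp : Submodule ℝ (StrongDual ℝ (Bil X Y)) :=
  (Submodule.span ℝ {u | ∃ x y, u = elemTensor X Y x y}).topologicalClosure

/-- The approximation property: for every `ε > 0` and every compact set `K` there is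
a finite-rank operator `T` with `‖T x - x‖ ≤ ε` on `K`. -/
def HasAP (Z : Type*) [NormedAddCommGroup Z] [NormedSpace ℝ Z] : Prop :=
  ∀ ε : ℝ, 0 < ε → ∀ K : Set Z, IsCompact K →
    ∃ T : Z →L[ℝ] Z, FiniteDimensional ℝ (LinearMap.range (T : Z →ₗ[ℝ] Z)) ∧
      ∀ x ∈ K, ‖T x - x‖ ≤ ε

lemma elemTensor_apply (x : X) (y : Y) (B : Bil X Y) : elemTensor X Y x y B = B x y := rfl

lemma elemTensor_smul_left (c : ℝ) (x : X) (y : Y) :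
    elemTensor X Y (c • x) y = c • elemTensor X Y x y := by
  ext B; simp [elemTensor_apply]

lemma elemTensor_add_left (x x' : X) (y : Y) :
    elemTensor X Y (x + x') y = elemTensor X Y x y + elemTensor X Y x' y := by
  ext B; simp [elemTensor_apply]

lemma elemTensor_smul_right (c : ℝ) (x : X) (y : Y) :
    elemTensor X Y x (c • y) = c • elemTensor X Y x y := by
  ext B; simp [elemTensor_apply]

lemma elemTensor_add_right (x : X) (y y' : Y) :
    elemTensor X Y x (y + y') = elemTensor X Y x y + elemTensor X Y x y' := by
  ext B; simp [elemTensor_apply]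

def tSet : Set (StrongDual ℝ (Bil X Y)) := {u | ∃ x y, u = elemTensor X Y x y}

def listSum (L : List (X × Y)) : StrongDual ℝ (Bil X Y) :=
  (L.map fun p => elemTensor X Y p.1 p.2).sum

def listWeight (L : List (X × Y)) : ℝ := (L.map fun p => ‖p.1‖ * ‖p.2‖).sum

lemma listWeight_nonneg (L : List (X × Y)) : 0 ≤ listWeight X Y L := by
  apply List.sum_nonneg
  intro a ha
  simp only [List.mem_map] at ha
  obtain ⟨p, -, rfl⟩ := ha
  positivity

lemma listSum_append (L M : List (X × Y)) :
    listSum X Y (L ++ M) = listSum X Y L + listSum X Y M := by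
  simp [listSum]

lemma listWeight_append (L M : List (X × Y)) :
    listWeight X Y (L ++ M) = listWeight X Y L + listWeight X Y M := by
  simp [listWeight]

lemma listSum_mem_span (L : List (X × Y)) : listSum X Y L ∈ Submodule.span ℝ (tSet X Y) := by
  induction L with
  | nil => simp [listSum]
  | cons p t ih =>
      rw [show p :: t = [p] ++ t from rfl, listSum_append]
      exact Submodule.add_mem _
        (Submodule.subset_span ⟨p.1, p.2, by simp [listSum]⟩) ih

lemma listSum_smul (c : ℝ) (L : List (X × Y)) :
    listSum X Y (L.map fun p => (c • p.1, p.2)) = c • listSum X Y L := by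
  induction L with
  | nil => simp [listSum]
  | cons p t iht =>
      simp only [listSum, List.map_cons, List.map_map, List.sum_cons, Function.comp] at *
      rw [iht, elemTensor_smul_left, smul_add]

lemma mem_span_iff_list (v : StrongDual ℝ (Bil X Y)) :
    v ∈ Submodule.span ℝ (tSet X Y) ↔ ∃ L, listSum X Y L = v := by
  constructor
  · intro hv
    induction hv using Submodule.span_induction with
    | mem u hu =>
        obtain ⟨x, y, rfl⟩ := hu
        exact ⟨[(x, y)], by simp [listSum]⟩
    | zero => exact ⟨[], by simp [listSum]⟩
    | add u w _ _ hu hw =>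
        obtain ⟨L, rfl⟩ := hu; obtain ⟨M, rfl⟩ := hw
        exact ⟨L ++ M, listSum_append X Y L M⟩
    | smul c u _ hu =>
        obtain ⟨L, rfl⟩ := hu
        exact ⟨L.map fun p => (c • p.1, p.2), listSum_smul X Y c L⟩
  · rintro ⟨L, rfl⟩; exact listSum_mem_span X Y L

def repSet (w : StrongDual ℝ (Bil X Y)) : Set ℝ :=
  {r | ∃ L, listSum X Y L = w ∧ listWeight X Y L = r}

def pnorm (w : StrongDual ℝ (Bil X Y)) : ℝ := sInf (repSet X Y w)

lemma repSet_nonempty {v : StrongDual ℝ (Bil X Y)} (hv : v ∈ Submodule.span ℝ (tSet X Y)) :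
    (repSet X Y v).Nonempty := by
  obtain ⟨L, hL⟩ := (mem_span_iff_list X Y v).1 hv
  exact ⟨listWeight X Y L, L, hL, rfl⟩

lemma repSet_bddBelow (v : StrongDual ℝ (Bil X Y)) : BddBelow (repSet X Y v) := by
  refine ⟨0, ?_⟩
  rintro r ⟨L, -, rfl⟩
  exact listWeight_nonneg X Y L

lemma pnorm_nonneg {v : StrongDual ℝ (Bil X Y)} (hv : v ∈ Submodule.span ℝ (tSet X Y)) :
    0 ≤ pnorm X Y v := by
  refine le_csInf (repSet_nonempty X Y hv) ?_
  rintro r ⟨L, -, rfl⟩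
  exact listWeight_nonneg X Y L

lemma pnorm_le {v : StrongDual ℝ (Bil X Y)} {L : List (X × Y)} (h : listSum X Y L = v) :
    pnorm X Y v ≤ listWeight X Y L :=
  csInf_le (repSet_bddBelow X Y v) ⟨L, h, rfl⟩

lemma pnorm_add {u v : StrongDual ℝ (Bil X Y)} (hu : u ∈ Submodule.span ℝ (tSet X Y))
    (hv : v ∈ Submodule.span ℝ (tSet X Y)) :
    pnorm X Y (u + v) ≤ pnorm X Y u + pnorm X Y v := by
  have key : ∀ r₁ ∈ repSet X Y u, ∀ r₂ ∈ repSet X Y v, pnorm X Y (u + v) ≤ r₁ + r₂ := by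
    rintro r₁ ⟨L, hL, rfl⟩ r₂ ⟨M, hM, rfl⟩
    rw [← listWeight_append]
    exact pnorm_le X Y (by rw [listSum_append, hL, hM])
  have step1 : ∀ r₁ ∈ repSet X Y u, pnorm X Y (u + v) - r₁ ≤ pnorm X Y v := by
    intro r₁ h₁
    refine le_csInf (repSet_nonempty X Y hv) fun r₂ h₂ => ?_
    linarith [key r₁ h₁ r₂ h₂]
  have step2 : pnorm X Y (u + v) - pnorm X Y v ≤ pnorm X Y u := by
    refine le_csInf (repSet_nonempty X Y hu) fun r₁ h₁ => ?_
    linarith [step1 r₁ h₁]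
  linarith

lemma pnorm_smul {c : ℝ} (hc : 0 < c) (v : StrongDual ℝ (Bil X Y)) :
    pnorm X Y (c • v) = c * pnorm X Y v := by
  have half : ∀ (c : ℝ), 0 < c → ∀ w : StrongDual ℝ (Bil X Y),
      pnorm X Y (c • w) ≤ c * pnorm X Y w := by
    intro c hc w
    have h1 : pnorm X Y (c • w) / c ≤ pnorm X Y w := by
      by_cases hne : (repSet X Y w).Nonempty
      · refine le_csInf hne ?_
        rintro r ⟨L, hL, rfl⟩
        rw [div_le_iff₀' hc]
        have hrep : listSum X Y (L.map fun p => (c • p.1, p.2)) = c • w := by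
          rw [listSum_smul, hL]
        have hfun : ((fun p : X × Y => ‖p.1‖ * ‖p.2‖) ∘ fun p : X × Y => (c • p.1, p.2))
            = fun p : X × Y => c * (‖p.1‖ * ‖p.2‖) := by
          funext p
          simp only [Function.comp_apply, norm_smul, Real.norm_eq_abs, abs_of_pos hc]
          ring
        have hw : listWeight X Y (L.map fun p => (c • p.1, p.2)) = c * listWeight X Y L := by
          rw [listWeight, List.map_map, hfun, List.sum_map_mul_left, listWeight]
        calc pnorm X Y (c • w) ≤ listWeight X Y (L.map fun p => (c • p.1, p.2)) :=
              pnorm_le X Y hrep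
          _ = c * listWeight X Y L := hw
      · -- repSet w empty: then repSet (c • w) is also empty, both sInf = 0
        have hne2 : ¬(repSet X Y (c • w)).Nonempty := by
          rintro ⟨r, L, hL, -⟩
          refine hne ⟨listWeight X Y (L.map fun p => (c⁻¹ • p.1, p.2)), _, ?_, rfl⟩
          rw [listSum_smul, hL, smul_smul, inv_mul_cancel₀ hc.ne', one_smul]
        have e1 : pnorm X Y w = 0 := by
          rw [pnorm, Set.not_nonempty_iff_eq_empty.1 hne, Real.sInf_empty]
        have e2 : pnorm X Y (c • w) = 0 := by
          rw [pnorm, Set.not_nonempty_iff_eq_empty.1 hne2, Real.sInf_empty]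
        simp [e1, e2]
    rw [div_le_iff₀ hc] at h1
    calc pnorm X Y (c • w) ≤ pnorm X Y w * c := h1
      _ = c * pnorm X Y w := mul_comm _ _
  refine le_antisymm (half c hc v) ?_
  have := half c⁻¹ (by positivity) (c • v)
  rw [smul_smul, inv_mul_cancel₀ hc.ne', one_smul] at this
  calc c * pnorm X Y v ≤ c * (c⁻¹ * pnorm X Y (c • v)) := by
        exact mul_le_mul_of_nonneg_left this hc.le
    _ = pnorm X Y (c • v) := by field_simp
lemma et_mem (x : X) (y : Y) : elemTensor X Y x y ∈ Submodule.span ℝ (tSet X Y) :=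
  Submodule.subset_span ⟨x, y, rfl⟩

set_option maxHeartbeats 2000000 in
set_option synthInstance.maxHeartbeats 400000 in
/-- Hahn-Banach duality: the projective seminorm on the span of elementary tensors is
dominated by the dual norm inherited from `B(X × Y)*`. -/
lemma exists_rep_le {v : StrongDual ℝ (Bil X Y)} (hv : v ∈ Submodule.span ℝ (tSet X Y))
    {ε : ℝ} (hε : 0 < ε) :
    ∃ L, listSum X Y L = v ∧ listWeight X Y L ≤ ‖v‖ + ε := by
  rcases eq_or_ne v 0 with rfl | hv0
  · exact ⟨[], by simp [listSum], by simp [listWeight]; positivity⟩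
  set W := Submodule.span ℝ (tSet X Y) with hW
  set N : W → ℝ := fun w => pnorm X Y (w : StrongDual ℝ (Bil X Y)) with hN
  have N_nonneg : ∀ w : W, 0 ≤ N w := fun w => pnorm_nonneg X Y w.2
  have N_hom : ∀ c : ℝ, 0 < c → ∀ w : W, N (c • w) = c * N w := by
    intro c hc w
    simpa [hN] using pnorm_smul X Y hc (w : StrongDual ℝ (Bil X Y))
  have N_add : ∀ w₁ w₂ : W, N (w₁ + w₂) ≤ N w₁ + N w₂ := by
    intro w₁ w₂
    simpa [hN] using pnorm_add X Y w₁.2 w₂.2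
  set v' : W := ⟨v, hv⟩ with hv'
  have hv'0 : v' ≠ 0 := fun h => hv0 (by simpa [hv'] using congrArg (Subtype.val) h)
  have H : ∀ c : ℝ, c • v' = 0 → c • (N v') = 0 := by
    intro c hc
    rcases eq_or_ne c 0 with rfl | hcne
    · simp
    · exfalso
      apply hv0
      have hval : c • v = 0 := congrArg Subtype.val hc
      calc v = c⁻¹ • (c • v) := by rw [smul_smul, inv_mul_cancel₀ hcne, one_smul]
        _ = 0 := by rw [hval, smul_zero]
  set f := LinearPMap.mkSpanSingleton' (σ := RingHom.id ℝ) v' (N v') H with hf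
  have hfdom : ∀ z : f.domain, f z ≤ N z := by
    rintro ⟨z, hz⟩
    rw [LinearPMap.domain_mkSpanSingleton] at hz
    obtain ⟨c, rfl⟩ := Submodule.mem_span_singleton.1 hz
    rw [LinearPMap.mkSpanSingleton'_apply, RingHom.id_apply]
    rcases lt_trichotomy c 0 with hc | rfl | hc
    · have : c • N v' ≤ 0 := by
        rw [smul_eq_mul]
        exact mul_nonpos_of_nonpos_of_nonneg hc.le (N_nonneg v')
      exact this.trans (N_nonneg _)
    · simpa using N_nonneg (0 : W)
    · rw [smul_eq_mul, ← N_hom c hc]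
  obtain ⟨g, hg_eq, hg_le⟩ := exists_extension_of_le_sublinear f N N_hom N_add hfdom
  -- the elementary tensor inside W
  set et : X → Y → W := fun x y => ⟨elemTensor X Y x y, et_mem X Y x y⟩ with het
  have g_bound : ∀ (x : X) (y : Y), |g (et x y)| ≤ ‖x‖ * ‖y‖ := by
    intro x y
    have le1 : ∀ (x : X) (y : Y), g (et x y) ≤ ‖x‖ * ‖y‖ := by
      intro x y
      refine (hg_le (et x y)).trans ?_
      have : pnorm X Y (elemTensor X Y x y) ≤ listWeight X Y [(x, y)] :=
        pnorm_le X Y (by simp [listSum])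
      simpa [listWeight] using this
    have le2 : -g (et x y) ≤ ‖x‖ * ‖y‖ := by
      have hneg : (et (-x) y) = -(et x y) := by
        apply Subtype.ext
        show elemTensor X Y (-x) y = -(elemTensor X Y x y)
        have := elemTensor_smul_left X Y (-1) x y
        simpa using this
      have := le1 (-x) y
      rw [hneg, map_neg, norm_neg] at this
      exact this
    exact abs_le.2 ⟨by linarith [le2], le1 x y⟩
  -- build the bilinear form
  set L2 : X →ₗ[ℝ] Y →ₗ[ℝ] ℝ := LinearMap.mk₂ ℝ (fun x y => g (et x y))
    (by
      intro x x' y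
      show g (et (x + x') y) = g (et x y) + g (et x' y)
      rw [← map_add]
      congr 1
      apply Subtype.ext
      show elemTensor X Y (x + x') y = elemTensor X Y x y + elemTensor X Y x' y
      exact elemTensor_add_left X Y x x' y)
    (by
      intro c x y
      show g (et (c • x) y) = c • g (et x y)
      rw [← map_smul]
      congr 1
      apply Subtype.ext
      show elemTensor X Y (c • x) y = c • elemTensor X Y x y
      exact elemTensor_smul_left X Y c x y)
    (by
      intro x y y'
      show g (et x (y + y')) = g (et x y) + g (et x y')
      rw [← map_add]
      congr 1
      apply Subtype.ext
      show elemTensor X Y x (y + y') = elemTensor X Y x y + elemTensor X Y x y'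
      exact elemTensor_add_right X Y x y y')
    (by
      intro c x y
      show g (et x (c • y)) = c • g (et x y)
      rw [← map_smul]
      congr 1
      apply Subtype.ext
      show elemTensor X Y x (c • y) = c • elemTensor X Y x y
      exact elemTensor_smul_right X Y c x y) with hL2
  set B : Bil X Y := LinearMap.mkContinuous₂ L2 1
    (fun x y => by
      rw [one_mul]
      simpa [hL2, Real.norm_eq_abs] using g_bound x y) with hB
  have hBnorm : ‖B‖ ≤ 1 := LinearMap.mkContinuous₂_norm_le L2 zero_le_one _
  have hBapp : ∀ (x : X) (y : Y), B x y = g (et x y) := fun x y => rfl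
  -- every element of the span evaluates at B to g
  have agree : ∀ t, ∀ ht : t ∈ W, t B = g ⟨t, ht⟩ := by
    intro t ht
    induction ht using Submodule.span_induction with
    | mem u hu =>
        obtain ⟨x, y, rfl⟩ := hu
        exact (hBapp x y).symm
    | zero =>
        have h0 : (0 : StrongDual ℝ (Bil X Y)) B = 0 := rfl
        rw [h0, show (⟨(0 : StrongDual ℝ (Bil X Y)), Submodule.zero_mem W⟩ : W) = (0 : W) from rfl,
          map_zero]
    | add u w hu hw ihu ihw =>
        have : (⟨u + w, Submodule.add_mem W hu hw⟩ : W) = ⟨u, hu⟩ + ⟨w, hw⟩ := rfl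
        rw [this, map_add, ← ihu, ← ihw]
        simp
    | smul c u hu ihu =>
        have : (⟨c • u, Submodule.smul_mem W c hu⟩ : W) = c • ⟨u, hu⟩ := rfl
        rw [this, map_smul, ← ihu]
        simp
  -- conclude
  have hv'mem : v' ∈ f.domain := by
    rw [hf, LinearPMap.domain_mkSpanSingleton]
    exact Submodule.mem_span_singleton_self v'
  have h1 : g v' = N v' := by
    have h2 := hg_eq ⟨v', hv'mem⟩
    rw [show ((⟨v', hv'mem⟩ : f.domain) : W) = v' from rfl] at h2
    rw [h2]
    exact LinearPMap.mkSpanSingleton'_apply_self v' (N v') H hv'mem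
  have key : pnorm X Y v ≤ ‖v‖ := by
    have h3 : v B = g v' := agree v hv
    calc pnorm X Y v = N v' := rfl
      _ = g v' := h1.symm
      _ = v B := h3.symm
      _ ≤ |v B| := le_abs_self _
      _ ≤ ‖v‖ * ‖B‖ := by simpa using ContinuousLinearMap.le_opNorm (𝕜 := ℝ) (𝕜₂ := ℝ) (σ₁₂ := RingHom.id ℝ) (E := Bil X Y) (F := ℝ) v B
      _ ≤ ‖v‖ * 1 := mul_le_mul_of_nonneg_left hBnorm (norm_nonneg v)
      _ = ‖v‖ := mul_one _
  obtain ⟨r, ⟨L, hL, rfl⟩, hr⟩ := exists_lt_of_csInf_lt (repSet_nonempty X Y hv)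
    (show pnorm X Y v < ‖v‖ + ε by linarith [key])
  exact ⟨L, hL, hr.le⟩
lemma sum_range_getD {M : Type*} [AddCommMonoid M] (F : X × Y → M) (L : List (X × Y)) :
    ∑ i ∈ Finset.range L.length, F (L.getD i (0, 0)) = (L.map F).sum := by
  induction L with
  | nil => simp
  | cons p t ih =>
      rw [List.length_cons, Finset.sum_range_succ', List.map_cons, List.sum_cons]
      simp only [List.getD_cons_succ, List.getD_cons_zero]
      rw [ih, add_comm]

lemma hasSum_getD {F : X × Y → ℝ} (hF : F (0, 0) = 0) (L : List (X × Y)) :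
    HasSum (fun i => F (L.getD i (0, 0))) (L.map F).sum := by
  rw [← sum_range_getD X Y F L]
  apply hasSum_sum_of_ne_finset_zero
  intro i hi
  rw [List.getD_eq_default]
  · exact hF
  · exact le_of_not_gt (by simpa [Finset.mem_range] using hi)

lemma listSum_apply (L : List (X × Y)) (B : Bil X Y) :
    listSum X Y L B = (L.map fun p => B p.1 p.2).sum := by
  induction L with
  | nil => simp [listSum]
  | cons p t ih =>
      simp only [listSum, List.map_cons, List.sum_cons] at *
      rw [ContinuousLinearMap.add_apply, ih, elemTensor_apply]

lemma abs_listSum_apply_le (L : List (X × Y)) (B : Bil X Y) :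
    |listSum X Y L B| ≤ ‖B‖ * listWeight X Y L := by
  rw [listSum_apply]
  induction L with
  | nil => simp [listWeight]
  | cons p t ih =>
      simp only [List.map_cons, List.sum_cons, listWeight] at *
      refine (abs_add_le _ _).trans ?_
      rw [mul_add]
      refine add_le_add ?_ ih
      have := B.le_opNorm₂ p.1 p.2
      simpa [Real.norm_eq_abs, mul_assoc] using this

set_option maxHeartbeats 2000000 in
/-- Every element of the projective tensor product is represented by an absolutely
convergent series of elementary tensors. -/
lemma exists_rep_of_mem_ptp {w : StrongDual ℝ (Bil X Y)} (hw : w ∈ ptp X Y) :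
    ∃ (a : ℕ → X) (b : ℕ → Y), Summable (fun n => ‖a n‖ * ‖b n‖) ∧
      ∀ B : Bil X Y, HasSum (fun n => B (a n) (b n)) (w B) := by
  have hw' : w ∈ closure (Submodule.span ℝ (tSet X Y) : Set (StrongDual ℝ (Bil X Y))) := by
    rw [← Submodule.topologicalClosure_coe]
    exact hw
  -- choose approximating sequence in the span
  have hchoice : ∀ k : ℕ, ∃ v, v ∈ Submodule.span ℝ (tSet X Y) ∧ dist w v < (1/2 : ℝ)^k := by
    intro k
    exact Metric.mem_closure_iff.1 hw' _ (by positivity)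
  choose v hvmem hvdist using hchoice
  -- telescoping differences
  set d : ℕ → StrongDual ℝ (Bil X Y) := fun k => Nat.rec (v 0) (fun k _ => v (k+1) - v k) k with hd
  have hd0 : d 0 = v 0 := rfl
  have hdsucc : ∀ k, d (k+1) = v (k+1) - v k := fun k => rfl
  have hdmem : ∀ k, d k ∈ Submodule.span ℝ (tSet X Y) := by
    intro k
    cases k with
    | zero => exact hvmem 0
    | succ k => exact Submodule.sub_mem _ (hvmem (k+1)) (hvmem k)
  have hdnorm : ∀ k, ‖d (k+1)‖ ≤ 2 * (1/2 : ℝ)^k := by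
    intro k
    rw [hdsucc]
    have h1 := hvdist (k+1)
    have h2 := hvdist k
    rw [dist_eq_norm] at h1 h2
    calc ‖v (k+1) - v k‖ = ‖-(w - v (k+1)) + (w - v k)‖ := by congr 1; abel
      _ ≤ ‖-(w - v (k+1))‖ + ‖w - v k‖ := norm_add_le _ _
      _ = ‖w - v (k+1)‖ + ‖w - v k‖ := by rw [norm_neg]
      _ ≤ (1/2)^(k+1) + (1/2)^k := by linarith
      _ ≤ 2 * (1/2)^k := by
          rw [pow_succ]
          nlinarith [pow_pos (by norm_num : (0:ℝ) < 1/2) k]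
  -- choose representations of the pieces
  have hrep : ∀ k, ∃ L, listSum X Y L = d k ∧ listWeight X Y L ≤ ‖d k‖ + (1/2 : ℝ)^k :=
    fun k => exists_rep_le X Y (hdmem k) (by positivity)
  choose L hLsum hLwt using hrep
  set wt : ℕ → ℝ := fun k => listWeight X Y (L k) with hwtdef
  have hwt_nonneg : ∀ k, 0 ≤ wt k := fun k => listWeight_nonneg X Y (L k)
  have hwt_summable : Summable wt := by
    rw [← summable_nat_add_iff 1]
    refine Summable.of_nonneg_of_le (fun k => hwt_nonneg _) (fun k => ?_)
      (((summable_geometric_of_lt_one (r := (1/2:ℝ)) (by norm_num) (by norm_num)).mul_left 3))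
    calc wt (k+1) ≤ ‖d (k+1)‖ + (1/2)^(k+1) := hLwt (k+1)
      _ ≤ 2 * (1/2)^k + (1/2)^k := by
          have := hdnorm k
          have h3 : ((1:ℝ)/2)^(k+1) ≤ (1/2)^k := by
            rw [pow_succ]
            nlinarith [pow_pos (by norm_num : (0:ℝ) < 1/2) k]
          linarith
      _ = 3 * (1/2)^k := by ring
  -- the padded double family
  set c : ℕ × ℕ → X × Y := fun ki => (L ki.1).getD ki.2 (0, 0) with hc
  have hf_summable : Summable (fun ki : ℕ × ℕ => ‖(c ki).1‖ * ‖(c ki).2‖) := by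
    rw [summable_prod_of_nonneg (fun ki => by positivity)]
    constructor
    · intro k
      exact (hasSum_getD X Y (F := fun p => ‖p.1‖ * ‖p.2‖) (by simp) (L k)).summable
    · refine hwt_summable.congr fun k => ?_
      exact ((hasSum_getD X Y (F := fun p => ‖p.1‖ * ‖p.2‖) (by simp) (L k)).tsum_eq).symm
  -- evaluation sums
  have heval : ∀ B : Bil X Y, HasSum (fun ki : ℕ × ℕ => B (c ki).1 (c ki).2) (w B) := by
    intro B
    have hBev : ∀ k, HasSum (fun i => B (c (k, i)).1 (c (k, i)).2) (listSum X Y (L k) B) := by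
      intro k
      rw [listSum_apply]
      exact hasSum_getD X Y (F := fun p => B p.1 p.2) (by simp) (L k)
    -- summability of the double family
    have hts : Summable (fun ki : ℕ × ℕ => B (c ki).1 (c ki).2) := by
      refine Summable.of_norm_bounded (hf_summable.mul_left ‖B‖) fun ki => ?_
      have := B.le_opNorm₂ (c ki).1 (c ki).2
      simpa [mul_assoc] using this
    -- the outer series
    set s : ℕ → ℝ := fun k => listSum X Y (L k) B with hs
    have hsk : ∀ k, s k = listSum X Y (L k) B := fun k => rfl
    have hs_summable : Summable s := by
      refine Summable.of_norm_bounded (hwt_summable.mul_left ‖B‖) fun k => ?_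
      simpa [Real.norm_eq_abs] using abs_listSum_apply_le X Y (L k) B
    have hpartial : ∀ n, ∑ k ∈ Finset.range (n+1), s k = v n B := by
      intro n
      induction n with
      | zero =>
          rw [Finset.sum_range_one, hsk 0, hLsum 0, hd0]
      | succ n ih =>
          rw [Finset.sum_range_succ, ih, hsk (n+1), hLsum (n+1), hdsucc n]
          show v n B + (v (n+1) B - v n B) = v (n+1) B; ring
      -- telescoping
    have hvB : Tendsto (fun n => v n B) atTop (𝓝 (w B)) := by
      have hv_tendsto : Tendsto v atTop (𝓝 w) := by
        rw [tendsto_iff_dist_tendsto_zero]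
        refine squeeze_zero (fun k => dist_nonneg) (fun k => (dist_comm (v k) w ▸ (hvdist k).le))
          ?_
        exact tendsto_pow_atTop_nhds_zero_of_lt_one (by norm_num) (by norm_num)
      exact ((ContinuousLinearMap.apply ℝ ℝ B).continuous.tendsto w).comp hv_tendsto
    have hsum_s : HasSum s (w B) := by
      have h1 := hs_summable.hasSum
      have h2 := h1.tendsto_sum_nat
      have h3 : Tendsto (fun n => ∑ k ∈ Finset.range (n+1), s k) atTop (𝓝 (∑' k, s k)) :=
        h2.comp (tendsto_add_atTop_nat 1)
      have h4 : Tendsto (fun n => ∑ k ∈ Finset.range (n+1), s k) atTop (𝓝 (w B)) := by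
        simpa only [hpartial] using hvB
      rwa [tendsto_nhds_unique h3 h4] at h1
    -- combine
    have h5 : ∑' ki : ℕ × ℕ, B (c ki).1 (c ki).2 = w B := by
      rw [Summable.tsum_prod' hts fun k => (hBev k).summable]
      calc ∑' k, ∑' i, B (c (k, i)).1 (c (k, i)).2 = ∑' k, s k := by
            congr 1
            funext k
            exact (hBev k).tsum_eq
        _ = w B := hsum_s.tsum_eq
    exact h5 ▸ hts.hasSum
  -- reindex over ℕ
  set e : ℕ ≃ ℕ × ℕ := (Denumerable.eqv (ℕ × ℕ)).symm with he
  refine ⟨fun n => (c (e n)).1, fun n => (c (e n)).2, ?_, ?_⟩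
  · exact (e.summable_iff (f := fun ki : ℕ × ℕ => ‖(c ki).1‖ * ‖(c ki).2‖)).2 hf_summable
  · intro B
    exact (e.hasSum_iff (f := fun ki : ℕ × ℕ => B (c ki).1 (c ki).2)).2 (heval B)
/-- Rescale a representation so that the first factors tend to zero in norm while the
second factors have summable norms. -/
lemma rescale (a : ℕ → X) (b : ℕ → Y) (h : Summable fun n => ‖a n‖ * ‖b n‖) :
    ∃ (a' : ℕ → X) (b' : ℕ → Y),
      Tendsto (fun n => ‖a' n‖) atTop (𝓝 0) ∧ Summable (fun n => ‖b' n‖) ∧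
      ∀ (B : Bil X Y) (n : ℕ), B (a' n) (b' n) = B (a n) (b n) := by
  set c : ℕ → ℝ := fun n => ‖a n‖ * ‖b n‖ with hcdef
  have hc_nonneg : ∀ n, 0 ≤ c n := fun n => by positivity
  set σ : ℕ → ℝ := fun n => ∑' m, c (m + n) with hσdef
  have hc_tail : ∀ n, Summable fun m => c (m + n) := fun n => (summable_nat_add_iff n).2 h
  have hσ_nonneg : ∀ n, 0 ≤ σ n := fun n => tsum_nonneg fun m => hc_nonneg _
  have hcσ : ∀ n, c n ≤ σ n := by
    intro n
    have := Summable.le_tsum (hc_tail n) 0 fun m _ => hc_nonneg _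
    simpa using this
  have hσ_step : ∀ n, σ n = c n + σ (n + 1) := by
    intro n
    have h1 := Summable.tsum_eq_zero_add (hc_tail n)
    rw [hσdef]
    simp only []
    rw [h1, zero_add]
    congr 1
    apply tsum_congr
    intro m
    congr 1
    omega
  have hσ_zero : Tendsto σ atTop (𝓝 0) := tendsto_sum_nat_add c
  -- rescaled sequences
  set a' : ℕ → X := fun n => if c n = 0 then 0 else (Real.sqrt (σ n) / ‖a n‖) • a n with ha'
  set b' : ℕ → Y := fun n => if c n = 0 then 0 else (‖a n‖ / Real.sqrt (σ n)) • b n with hb'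
  have hσpos : ∀ n, c n ≠ 0 → 0 < σ n := by
    intro n hn
    exact lt_of_lt_of_le (lt_of_le_of_ne (hc_nonneg n) (Ne.symm hn)) (hcσ n)
  have hapos : ∀ n, c n ≠ 0 → 0 < ‖a n‖ := by
    intro n hn
    rcases (mul_ne_zero_iff.1 hn) with ⟨h1, -⟩
    exact lt_of_le_of_ne (norm_nonneg _) (Ne.symm h1)
  have ha'n : ∀ n, ‖a' n‖ ≤ Real.sqrt (σ n) := by
    intro n
    rw [ha']
    by_cases hn : c n = 0
    · simp [hn, Real.sqrt_nonneg]
    · simp only [if_neg hn, norm_smul, Real.norm_eq_abs]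
      rw [abs_of_pos (div_pos (Real.sqrt_pos.2 (hσpos n hn)) (hapos n hn))]
      rw [div_mul_cancel₀]
      exact (hapos n hn).ne'
  refine ⟨a', b', ?_, ?_, ?_⟩
  · -- norms of a' tend to zero
    refine squeeze_zero (fun n => norm_nonneg _) ha'n ?_
    have : Tendsto Real.sqrt (𝓝 0) (𝓝 0) := by
      simpa [Real.sqrt_zero] using (Real.continuous_sqrt.tendsto 0)
    exact this.comp hσ_zero
  · -- summability of norms of b'
    have hb'bound : ∀ n, ‖b' n‖ ≤ 2 * (Real.sqrt (σ n) - Real.sqrt (σ (n + 1))) := by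
      intro n
      by_cases hn : c n = 0
      · have : σ (n + 1) = σ n := by rw [hσ_step n, hn, zero_add]
        rw [hb']
        simp [hn, this]
      · have hσn := hσpos n hn
        have hσn1 : σ (n + 1) ≤ σ n := by
          rw [hσ_step n]
          linarith [hc_nonneg n]
        have hσ1nn := hσ_nonneg (n + 1)
        set s := Real.sqrt (σ n) with hs
        set t := Real.sqrt (σ (n + 1)) with ht
        have hspos : 0 < s := Real.sqrt_pos.2 hσn
        have htnn : 0 ≤ t := Real.sqrt_nonneg _
        have hts : t ≤ s := Real.sqrt_le_sqrt hσn1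
        have hs2 : s ^ 2 = σ n := Real.sq_sqrt (hσ_nonneg n)
        have ht2 : t ^ 2 = σ (n + 1) := Real.sq_sqrt hσ1nn
        have hcval : c n = s ^ 2 - t ^ 2 := by
          rw [hs2, ht2, hσ_step n]; ring
        have hbn : ‖b' n‖ = c n / s := by
          rw [hb']
          simp only [if_neg hn, norm_smul, Real.norm_eq_abs]
          rw [abs_of_pos (div_pos (hapos n hn) hspos), div_mul_eq_mul_div]
        rw [hbn, div_le_iff₀ hspos, hcval]
        nlinarith
    refine summable_of_sum_range_le (c := 2 * Real.sqrt (σ 0)) (fun n => norm_nonneg _) ?_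
    intro n
    calc ∑ i ∈ Finset.range n, ‖b' i‖
        ≤ ∑ i ∈ Finset.range n, 2 * (Real.sqrt (σ i) - Real.sqrt (σ (i + 1))) :=
          Finset.sum_le_sum fun i _ => hb'bound i
      _ = 2 * (Real.sqrt (σ 0) - Real.sqrt (σ n)) := by
          rw [← Finset.mul_sum, Finset.sum_range_sub']
      _ ≤ 2 * Real.sqrt (σ 0) := by
          have := Real.sqrt_nonneg (σ n)
          linarith
  · -- the elementary tensors are unchanged
    intro B n
    rw [ha', hb']
    by_cases hn : c n = 0
    · simp only [if_pos hn]
      rcases mul_eq_zero.1 hn with h1 | h1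
      · rw [norm_eq_zero.1 h1]
        simp
      · rw [norm_eq_zero.1 h1]
        simp
    · simp only [if_neg hn, map_smul, ContinuousLinearMap.smul_apply, smul_eq_mul,
        ContinuousLinearMap.map_smul]
      have h1 : ‖a n‖ ≠ 0 := (hapos n hn).ne'
      have h2 : Real.sqrt (σ n) ≠ 0 := (Real.sqrt_pos.2 (hσpos n hn)).ne'
      field_simp
set_option maxHeartbeats 1000000 in
set_option synthInstance.maxHeartbeats 1000000 in
/-- If `X` has the approximation property, an element of the projective tensor product
(given by a good series representation) vanishing on all rank-one bilinear forms vanishes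
identically. -/
lemma vanish_AP (hAP : HasAP X) {w : StrongDual ℝ (Bil X Y)} (a : ℕ → X) (b : ℕ → Y)
    (ha : Tendsto (fun n => ‖a n‖) atTop (𝓝 0)) (hb : Summable fun n => ‖b n‖)
    (hrep : ∀ B : Bil X Y, HasSum (fun n => B (a n) (b n)) (w B))
    (hzero : ∀ (f : X →L[ℝ] ℝ) (g : Y →L[ℝ] ℝ), w (f.smulRight g) = 0)
    (B : Bil X Y) : w B = 0 := by
  have ha' : Tendsto a atTop (𝓝 0) := tendsto_zero_iff_norm_tendsto_zero.2 ha
  have hK : IsCompact (insert (0 : X) (Set.range a)) := ha'.isCompact_insert_range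
  set Mb : ℝ := ∑' n, ‖b n‖ with hMb
  have hMb0 : 0 ≤ Mb := tsum_nonneg fun n => norm_nonneg _
  have key : ∀ ε : ℝ, 0 < ε → |w B| ≤ ε := by
    intro ε hε
    set D : ℝ := ‖B‖ * Mb + 1 with hD
    have hD0 : 0 < D := by positivity
    set δ : ℝ := ε / D with hδ
    have hδ0 : 0 < δ := div_pos hε hD0
    obtain ⟨T, hTfin, hTapprox⟩ := hAP δ hδ0 _ hK
    -- decompose T through a basis of its range
    haveI : FiniteDimensional ℝ (LinearMap.range (T : X →ₗ[ℝ] X)) := hTfin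
    set F := LinearMap.range (T : X →ₗ[ℝ] X) with hF
    set β : Module.Basis (Fin (Module.finrank ℝ F)) ℝ F := Module.finBasis ℝ F with hβ
    set S : X →L[ℝ] F := T.codRestrict F (fun z => LinearMap.mem_range_self _ z) with hS
    set φ : ℕ → (X →L[ℝ] ℝ) := fun j =>
      if hj : j < Module.finrank ℝ F then
        ((β.coord ⟨j, hj⟩).toContinuousLinearMap).comp S else 0 with hφ
    have hT_decomp : ∀ z : X, T z = ∑ j : Fin (Module.finrank ℝ F),
        (β.coord j) (S z) • (β j : X) := by
      intro z
      have h1 : (S z : X) = T z := rfl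
      rw [← h1, ← β.sum_repr (S z)]
      rw [Submodule.coe_sum]
      simp only [Submodule.coe_smul, Module.Basis.coord_apply]
      rw [← β.sum_repr (S z)]
      simp
    -- the finite-rank bilinear form
    set C : Bil X Y := ∑ j : Fin (Module.finrank ℝ F),
      (((β.coord j).toContinuousLinearMap).comp S).smulRight (B (β j : X)) with hC
    have hCapp : ∀ z y, C z y = B (T z) y := by
      intro z y
      rw [hC]
      rw [hT_decomp z]
      simp only [ContinuousLinearMap.sum_apply, ContinuousLinearMap.smulRight_apply,
        ContinuousLinearMap.coe_comp', Function.comp_apply, map_sum, map_smul]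
      rfl
    have hwC : w C = 0 := by
      rw [hC, map_sum]
      exact Finset.sum_eq_zero fun j _ => hzero _ _
    -- evaluate w at B - C
    have hsum := hrep (B - C)
    have hval : w (B - C) = w B := by
      have := map_sub (w : Bil X Y →L[ℝ] ℝ) B C; rw [hwC, sub_zero] at this; exact this
    rw [hval] at hsum
    have hbound : ∀ n, |(B - C) (a n) (b n)| ≤ (‖B‖ * δ) * ‖b n‖ := by
      intro n
      have h0 : (B - C) (a n) (b n) = B (a n - T (a n)) (b n) := by
        simp only [ContinuousLinearMap.sub_apply, hCapp, map_sub]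
      rw [h0]
      have h1 : ‖a n - T (a n)‖ ≤ δ := by
        rw [norm_sub_rev]
        exact hTapprox (a n) (Set.mem_insert_of_mem _ (Set.mem_range_self n))
      calc |B (a n - T (a n)) (b n)| ≤ ‖B‖ * ‖a n - T (a n)‖ * ‖b n‖ := by
            simpa [Real.norm_eq_abs] using B.le_opNorm₂ (a n - T (a n)) (b n)
        _ ≤ (‖B‖ * δ) * ‖b n‖ := by
            apply mul_le_mul_of_nonneg_right _ (norm_nonneg _)
            exact mul_le_mul_of_nonneg_left h1 (norm_nonneg B)
    have habs : |w B| ≤ (‖B‖ * δ) * Mb := by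
      have h2 : Summable fun n => |(B - C) (a n) (b n)| := by
        refine Summable.of_nonneg_of_le (fun n => abs_nonneg _) hbound (hb.mul_left _)
      have h3 : |w B| ≤ ∑' n, |(B - C) (a n) (b n)| := by
        rw [← hsum.tsum_eq]
        have h4 := norm_tsum_le_tsum_norm (f := fun n => (B - C) (a n) (b n))
          (by simpa [Real.norm_eq_abs] using h2)
        simpa [Real.norm_eq_abs] using h4
      refine h3.trans ?_
      rw [hMb, ← tsum_mul_left]
      exact Summable.tsum_le_tsum hbound h2 (hb.mul_left _)
    refine habs.trans ?_
    have : ‖B‖ * Mb * δ ≤ D * δ := by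
      apply mul_le_mul_of_nonneg_right _ hδ0.le
      rw [hD]; linarith
    calc ‖B‖ * δ * Mb = ‖B‖ * Mb * δ := by ring
      _ ≤ D * δ := this
      _ = ε := by rw [hδ]; field_simp
  by_contra hne
  have h4 : 0 < |w B| := abs_pos.2 hne
  have := key (|w B| / 2) (by linarith)
  linarith

set_option maxHeartbeats 1000000 in
set_option synthInstance.maxHeartbeats 1000000 in
/-- if `X` or `Y` has the approximation property, `xₙ → x` weakly,
`yₙ → y` weakly and `(xₙ ⊗ yₙ)` converges weakly in `X ⊗̂_π Y`, then
`(xₙ ⊗ yₙ)` converges weakly to `x ⊗ y`. -/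
theorem tensor_sequence_weak_limit (hAP : HasAP X ∨ HasAP Y)
    (x : ℕ → X) (y : ℕ → Y) (x₀ : X) (y₀ : Y)
    (hx : ∀ f : X →L[ℝ] ℝ, Tendsto (fun n => f (x n)) atTop (𝓝 (f x₀)))
    (hy : ∀ g : Y →L[ℝ] ℝ, Tendsto (fun n => g (y n)) atTop (𝓝 (g y₀)))
    (hconv : ∃ u : StrongDual ℝ (Bil X Y), u ∈ ptp X Y ∧
      ∀ B : Bil X Y, Tendsto (fun n => elemTensor X Y (x n) (y n) B) atTop (𝓝 (u B))) :
    ∀ B : Bil X Y, Tendsto (fun n => elemTensor X Y (x n) (y n) B) atTop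
      (𝓝 (elemTensor X Y x₀ y₀ B)) := by
  obtain ⟨u, humem, hulim⟩ := hconv
  intro B
  set w : StrongDual ℝ (Bil X Y) := u - elemTensor X Y x₀ y₀ with hwdef
  have hx0mem : elemTensor X Y x₀ y₀ ∈ ptp X Y :=
    Submodule.le_topologicalClosure _ (Submodule.subset_span ⟨x₀, y₀, rfl⟩)
  have hwmem : w ∈ ptp X Y := Submodule.sub_mem _ humem hx0mem
  have hzero : ∀ (f : X →L[ℝ] ℝ) (g : Y →L[ℝ] ℝ), w (f.smulRight g) = 0 := by
    intro f g
    have h1 : Tendsto (fun n => elemTensor X Y (x n) (y n) (f.smulRight g)) atTop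
        (𝓝 (f x₀ * g y₀)) := by
      have := (hx f).mul (hy g)
      simpa [elemTensor_apply, ContinuousLinearMap.smulRight_apply, smul_eq_mul] using this
    have h3 : u (f.smulRight g) = f x₀ * g y₀ := tendsto_nhds_unique (hulim (f.smulRight g)) h1
    rw [hwdef]
    rw [show (u - elemTensor X Y x₀ y₀) (f.smulRight g) = u (f.smulRight g) - elemTensor X Y x₀ y₀ (f.smulRight g) from rfl, h3]
    have h4 : elemTensor X Y x₀ y₀ (f.smulRight g) = f x₀ * g y₀ := rfl
    rw [h4, sub_self]
  obtain ⟨a, b, hsummable, hrep⟩ := exists_rep_of_mem_ptp X Y hwmem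
  have hwB : w B = 0 := by
    rcases hAP with hAPX | hAPY
    · obtain ⟨a', b', ha', hb', hsc⟩ := rescale X Y a b hsummable
      have hrep' : ∀ B0 : Bil X Y, HasSum (fun n => B0 (a' n) (b' n)) (w B0) := by
        intro B0
        have hfe : (fun n => B0 (a' n) (b' n)) = fun n => B0 (a n) (b n) :=
          funext fun n => hsc B0 n
        rw [hfe]
        exact hrep B0
      exact vanish_AP X Y hAPX a' b' ha' hb' hrep' hzero B
    · have hsummable' : Summable fun n => ‖b n‖ * ‖a n‖ := by
        refine hsummable.congr fun n => ?_
        exact mul_comm _ _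
      obtain ⟨b', a', hb', ha', hsc⟩ := rescale Y X b a hsummable'
      set e : (Bil Y X) ≃L[ℝ] Bil X Y :=
        (ContinuousLinearMap.flipₗᵢ ℝ Y X ℝ).toContinuousLinearEquiv with he
      set w' : StrongDual ℝ (Bil Y X) := w.comp (e : (Bil Y X) →L[ℝ] Bil X Y) with hw'
      have hw'app : ∀ B' : Bil Y X, w' B' = w B'.flip := fun B' => rfl
      have hzero' : ∀ (g : Y →L[ℝ] ℝ) (f : X →L[ℝ] ℝ), w' (g.smulRight f) = 0 := by
        intro g f
        rw [hw'app]
        have hflip : (g.smulRight f).flip = f.smulRight g := by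
          apply ContinuousLinearMap.ext
          intro x1
          apply ContinuousLinearMap.ext
          intro y1
          simp [mul_comm]
        rw [hflip]
        exact hzero f g
      have hrep' : ∀ B' : Bil Y X, HasSum (fun n => B' (b' n) (a' n)) (w' B') := by
        intro B'
        rw [hw'app]
        have hfe : (fun n => B' (b' n) (a' n)) = fun n => B'.flip (a n) (b n) :=
          funext fun n => (hsc B' n).trans rfl
        rw [hfe]
        exact hrep B'.flip
      have hv := vanish_AP Y X hAPY b' a' hb' ha' hrep' hzero' B.flip
      rw [hw'app, ContinuousLinearMap.flip_flip] at hv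
      exact hv
  have hfinal : u B = elemTensor X Y x₀ y₀ B := by
    have h5 : w B = u B - elemTensor X Y x₀ y₀ B := rfl
    rw [hwB] at h5
    linarith
  rw [← hfinal]
  exact hulim B
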